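/- In the setting of Theorem 2 (k ≥ 2, G a k-connected graph on n vertices, distinct vertices v₁, …, v_k, positive integers n₁, …, n_k with n₁ + ⋯ + n_k < n, and pairwise disjoint connected subgraphs G₁, …, G_k with |V(G_i)| = n_i and v_i ∈ V(G_i)): if there exists an optimal configuration containing a bridge, then G has pairwise vertex-disjoint connected subgraphs G₁′, G₂′, …, G_k′ such that v_i ∈ V(G_i′) for i = 1, 2, …, k, the subgraph G₁′ has exactly n₁ + 1 vertices, and for each i = 2, 3, …, k the subgraph G_i′ has exactly n_i vertices. -/

import Mathlib

/-- A graph `G` on a finite vertex type is `k`-connected if it has more than `k`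
vertices and remains connected after deleting any set of fewer than `k` vertices. -/
def KConnected {V : Type} [Fintype V] (G : SimpleGraph V) (k : ℕ) : Prop :=
  k < Fintype.card V ∧
    ∀ D : Finset V, D.card < k → (G.induce ((↑D : Set V)ᶜ)).Connected

/-- The reservoir of `w` (inside the part with vertex set `A` and root `vi`):
the set of vertices of `A` connected to `vi` by a path in the graph induced on
`A` minus `w`.  (So `w` is not in its own reservoir, and the reservoir of `vi`
itself is empty.) -/
def reservoir {V : Type} (G : SimpleGraph V) (A : Set V) (vi w : V) : Set V :=
  {u | ∃ (hu : u ∈ A \ {w}) (hv : vi ∈ A \ {w}),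
    (G.induce (A \ {w})).Reachable ⟨vi, hv⟩ ⟨u, hu⟩}

/-- A configuration: pairwise disjoint connected vertex sets `A i` with
`|A i| = m i` and `v i ∈ A i`, together with exactly one cascade `c i` in each
part `i ≠ 0` (the cascade of part `0` is null).  A cascade in part `i` is a
sequence of distinct vertices of `A i`, all different from `v i`, in which each
vertex is not in the reservoir of the previous one. -/
structure Config {V : Type} [Fintype V] (G : SimpleGraph V) (k : ℕ) [NeZero k]
    (v : Fin k → V) (m : Fin k → ℕ) where
  A : Fin k → Set V
  c : Fin k → List V
  disj : Pairwise fun i j => Disjoint (A i) (A j)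
  conn : ∀ i, (G.induce (A i)).Connected
  hcard : ∀ i, (A i).ncard = m i
  hmem : ∀ i, v i ∈ A i
  c_zero : c 0 = []
  c_nodup : ∀ i, (c i).Nodup
  c_mem : ∀ i, ∀ w ∈ c i, w ∈ A i ∧ w ≠ v i
  c_chain : ∀ i, (c i).Chain' fun a b => b ∉ reservoir G (A i) (v i) a

variable {V : Type} [Fintype V] {G : SimpleGraph V} {k : ℕ} [NeZero k]
  {v : Fin k → V} {m : Fin k → ℕ}

/-- A cascade vertex is a vertex belonging to one of the cascades. -/
def IsCascadeVertex (cfg : Config G k v m) (w : V) : Prop :=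
  ∃ i, w ∈ cfg.c i

/-- `RankLink cfg P w` says: `w` is a cascade vertex of some part `i` and there
is a cascade vertex `w'` of a different part `j` satisfying `P` such that `w`
has a neighbor in the reservoir of `w'`. -/
def RankLink (cfg : Config G k v m) (P : V → Prop) (w : V) : Prop :=
  ∃ i j : Fin k, i ≠ j ∧ w ∈ cfg.c i ∧
    ∃ w' ∈ cfg.c j, P w' ∧ ∃ u ∈ reservoir G (cfg.A j) (v j) w', G.Adj w u

/-- `HasRank cfg r w` says the cascade vertex `w` has rank `r`: rank `1` means
`w` has a neighbor in part `0`; otherwise the rank is the least `r ≥ 2` such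
that `w` has a neighbor in the reservoir of a cascade vertex of rank `r - 1`
in a different part. -/
def HasRank (cfg : Config G k v m) : ℕ → V → Prop
  | 0 => fun _ => False
  | 1 => fun w => IsCascadeVertex cfg w ∧ ∃ u ∈ cfg.A 0, G.Adj w u
  | r + 2 => fun w =>
      IsCascadeVertex cfg w ∧ (¬ ∃ u ∈ cfg.A 0, G.Adj w u) ∧
      RankLink cfg (HasRank cfg (r + 1)) w ∧
      ∀ s, s < r → ¬ RankLink cfg (HasRank cfg (s + 1)) w

/-- A configuration is valid if every cascade vertex has a well-defined rank and
the rank is strictly increasing along each cascade. -/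
def Valid (cfg : Config G k v m) : Prop :=
  (∀ w, IsCascadeVertex cfg w → ∃ r, HasRank cfg r w) ∧
  ∀ i, (cfg.c i).Pairwise fun a b =>
    ∀ ra rb, HasRank cfg ra a → HasRank cfg rb b → ra < rb

/-- `rho cfg r` is the total number of vertices belonging to the reservoir of
some cascade vertex of rank `r`. -/
noncomputable def rho (cfg : Config G k v m) (r : ℕ) : ℕ :=
  {u | ∃ i, ∃ w ∈ cfg.c i, HasRank cfg r w ∧
    u ∈ reservoir G (cfg.A i) (v i) w}.ncard

/-- A valid configuration is `r`-optimal if, among all valid configurations, it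
maximizes `rho 1`, subject to that maximizes `rho 2`, and so on up to `rho r`.
(`ROptimal cfg 0` just says the configuration is valid.) -/
def ROptimal (cfg : Config G k v m) : ℕ → Prop
  | 0 => Valid cfg
  | r + 1 => ROptimal cfg r ∧
      ∀ cfg' : Config G k v m, ROptimal cfg' r →
        rho cfg' (r + 1) ≤ rho cfg (r + 1)

/-- A configuration is optimal if it is `r`-optimal for every `r`. -/
def Optimal (cfg : Config G k v m) : Prop := ∀ r, ROptimal cfg r

/-- `u` belongs to the reservoir of some cascade vertex. -/
def InReservoir (cfg : Config G k v m) (u : V) : Prop :=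
  ∃ i, ∃ w ∈ cfg.c i, u ∈ reservoir G (cfg.A i) (v i) w

/-- A bridge: an edge of `G` with one end in
`S = V(G) − V(G₁) − ⋯ − V(G_k)` and the other end in the reservoir of a
cascade vertex. -/
def IsBridgeEdge (cfg : Config G k v m) (a b : V) : Prop :=
  G.Adj a b ∧ (∀ i, a ∉ cfg.A i) ∧ InReservoir cfg b

section Helpers
set_option linter.unusedSectionVars false

variable (G) in
/-- Adjacency within a set. -/
def Adjin (X : Set V) (x y : V) : Prop := x ∈ X ∧ y ∈ X ∧ G.Adj x y

variable (G) in
/-- Reachability within a set. -/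
def Rst (X : Set V) : V → V → Prop := Relation.ReflTransGen (Adjin G X)

lemma Adjin.symm' {X : Set V} {x y : V} (h : Adjin G X x y) : Adjin G X y x :=
  ⟨h.2.1, h.1, h.2.2.symm⟩

lemma rst_mono {X Y : Set V} (hXY : X ⊆ Y) {x y : V} (h : Rst G X x y) : Rst G Y x y := by
  induction h with
  | refl => exact Relation.ReflTransGen.refl
  | tail _ hbc ih => exact ih.tail ⟨hXY hbc.1, hXY hbc.2.1, hbc.2.2⟩

lemma rst_symm {X : Set V} {x y : V} (h : Rst G X x y) : Rst G X y x := by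
  induction h with
  | refl => exact Relation.ReflTransGen.refl
  | tail _ hbc ih => exact Relation.ReflTransGen.trans (Relation.ReflTransGen.single hbc.symm') ih

lemma rst_trans {X : Set V} {x y z : V} (h : Rst G X x y) (h' : Rst G X y z) : Rst G X x z :=
  Relation.ReflTransGen.trans h h'

lemma rst_mem_right {X : Set V} {x y : V} (hx : x ∈ X) (h : Rst G X x y) : y ∈ X := by
  induction h with
  | refl => exact hx
  | tail _ hbc _ => exact hbc.2.1

/-- Walks in an induced subgraph give `Rst`. -/
lemma rst_of_reachable {X : Set V} {x y : V} (hx : x ∈ X) (hy : y ∈ X)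
    (h : (G.induce X).Reachable ⟨x, hx⟩ ⟨y, hy⟩) : Rst G X x y := by
  obtain ⟨w⟩ := h
  generalize hA : (⟨x, hx⟩ : X) = aa at w
  generalize hB : (⟨y, hy⟩ : X) = bb at w
  induction w generalizing x y with
  | nil =>
    subst hA; cases hB
    exact Relation.ReflTransGen.refl
  | @cons a b c hadj p ih =>
    subst hA hB
    have hab : Adjin G X x (b : V) := ⟨hx, b.2, by exact hadj⟩
    exact Relation.ReflTransGen.head hab (ih b.2 hy rfl rfl)

lemma reachable_of_rst {X : Set V} {x y : V} (hx : x ∈ X) (h : Rst G X x y) :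
    ∃ hy : y ∈ X, (G.induce X).Reachable ⟨x, hx⟩ ⟨y, hy⟩ := by
  induction h with
  | refl => exact ⟨hx, SimpleGraph.Reachable.refl _⟩
  | @tail b c _ hbc ih =>
    obtain ⟨hb, hr⟩ := ih
    exact ⟨hbc.2.1, hr.trans (SimpleGraph.Adj.reachable (by exact hbc.2.2))⟩

lemma connected_induce_iff {X : Set V} :
    (G.induce X).Connected ↔ X.Nonempty ∧ ∀ x ∈ X, ∀ y ∈ X, Rst G X x y := by
  constructor
  · intro h
    refine ⟨⟨(h.nonempty.some : X), (h.nonempty.some).2⟩, fun x hx y hy => ?_⟩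
    exact rst_of_reachable hx hy (h.preconnected _ _)
  · rintro ⟨⟨x0, hx0⟩, h⟩
    have hne : Nonempty (X : Set V) := ⟨⟨x0, hx0⟩⟩
    have hpre : (G.induce X).Preconnected := by
      intro a b
      obtain ⟨hb, hr⟩ := reachable_of_rst a.2 (h a a.2 b b.2)
      convert hr <;> simp
    exact ⟨hpre⟩

/-- Chains starting in a "closed" set stay there. -/
lemma rst_closed {X T : Set V} {x y : V}
    (hT : ∀ a b, a ∈ T → b ∈ X → G.Adj a b → b ∈ T)
    (h : Rst G X x y) (hx : x ∈ T) : y ∈ T ∧ Rst G T x y := by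
  induction h with
  | refl => exact ⟨hx, Relation.ReflTransGen.refl⟩
  | @tail b c _ hbc ih =>
    have hc : c ∈ T := hT b c ih.1 hbc.2.1 hbc.2.2
    exact ⟨hc, ih.2.tail ⟨ih.1, hc, hbc.2.2⟩⟩

/-- Glue two connected induced subgraphs along a crossing edge. -/
lemma induce_union_connected_of_adj {X Y : Set V} {x y : V}
    (hX : (G.induce X).Connected) (hY : (G.induce Y).Connected)
    (hx : x ∈ X) (hy : y ∈ Y) (hadj : G.Adj x y) :
    (G.induce (X ∪ Y)).Connected := by
  rw [connected_induce_iff] at hX hY ⊢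
  refine ⟨⟨x, Or.inl hx⟩, fun a ha b hb => ?_⟩
  have key : ∀ z ∈ X ∪ Y, Rst G (X ∪ Y) z x := by
    intro z hz
    rcases hz with hz | hz
    · exact rst_mono Set.subset_union_left (hX.2 z hz x hx)
    · refine rst_trans (rst_mono Set.subset_union_right (hY.2 z hz y hy)) ?_
      exact Relation.ReflTransGen.single ⟨Or.inr hy, Or.inl hx, hadj.symm⟩
  exact rst_trans (key a ha) (rst_symm (key b hb))

lemma induce_singleton_connected (x : V) : (G.induce ({x} : Set V)).Connected := by
  rw [connected_induce_iff]
  refine ⟨⟨x, rfl⟩, fun a ha b hb => ?_⟩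
  simp only [Set.mem_singleton_iff] at ha hb
  subst ha; subst hb; exact Relation.ReflTransGen.refl

lemma induce_insert_connected_of_adj {X : Set V} {x y : V}
    (hX : (G.induce X).Connected) (hx : x ∈ X) (hadj : G.Adj x y) :
    (G.induce (X ∪ {y})).Connected :=
  induce_union_connected_of_adj hX (induce_singleton_connected y) hx rfl hadj

end Helpers

section Leaf
set_option linter.unusedSectionVars false

lemma rst_of_walk_avoid {X : Set V} {c : V} {a b : X} (w : (G.induce X).Walk a b)
    (hc : ∀ z ∈ w.support, (z : V) ≠ c) : Rst G (X \ {c}) (a : V) (b : V) := by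
  induction w with
  | nil => exact Relation.ReflTransGen.refl
  | @cons p q r hadj w ih =>
    refine Relation.ReflTransGen.head ⟨⟨p.2, hc p (SimpleGraph.Walk.start_mem_support _)⟩,
      ⟨q.2, hc q (by simp)⟩, by exact hadj⟩ (ih fun z hz => hc z (by simp [hz]))

/-- In a connected induced subgraph with at least two vertices one can delete some vertex
other than a prescribed one, keeping it connected. -/
lemma exists_noncut {X : Set V} (hc : (G.induce X).Connected) {x : V} (hx : x ∈ X)
    {y0 : V} (hy0 : y0 ∈ X) (hne : y0 ≠ x) :
    ∃ c ∈ X, c ≠ x ∧ (G.induce (X \ {c})).Connected := by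
  classical
  haveI : Fintype X := (Set.toFinite X).fintype
  obtain ⟨c, -, hcmax⟩ := Finset.exists_max_image (Finset.univ : Finset X)
    (fun z => (G.induce X).dist z ⟨x, hx⟩) ⟨⟨y0, hy0⟩, Finset.mem_univ _⟩
  have hpos : 0 < (G.induce X).dist c ⟨x, hx⟩ := by
    refine lt_of_lt_of_le ?_ (hcmax ⟨y0, hy0⟩ (Finset.mem_univ _))
    exact hc.pos_dist_of_ne (by simp [hne])
  have hcx : (c : V) ≠ x := by
    intro h
    have : (⟨x, hx⟩ : X) = c := Subtype.ext h.symm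
    rw [this] at hpos
    simp [SimpleGraph.dist_self] at hpos
  -- every other vertex has a geodesic to x avoiding c
  have key : ∀ z : X, z ≠ c → Rst G (X \ {(c : V)}) (z : V) x := by
    intro z hz
    obtain ⟨p, hp⟩ := (hc.preconnected z ⟨x, hx⟩).exists_walk_length_eq_dist
    have hcsup : c ∉ p.support := by
      intro hmem
      have hsplit := p.take_spec hmem
      have hlen : (p.takeUntil c hmem).length + (p.dropUntil c hmem).length = p.length := by
        rw [← SimpleGraph.Walk.length_append, hsplit]
      have h1 : 1 ≤ (p.takeUntil c hmem).length := by
        rcases Nat.eq_zero_or_pos (p.takeUntil c hmem).length with h0 | h0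
        · exact absurd (SimpleGraph.Walk.eq_of_length_eq_zero h0) hz
        · exact h0
      have hd : (G.induce X).dist c ⟨x, hx⟩ ≤ (p.dropUntil c hmem).length :=
        SimpleGraph.dist_le _
      have hzc : (G.induce X).dist z ⟨x, hx⟩ ≤ (G.induce X).dist c ⟨x, hx⟩ :=
        hcmax z (Finset.mem_univ _)
      omega
    exact rst_of_walk_avoid p fun w hw => fun hwc => hcsup (by rwa [Subtype.ext hwc] at hw)
  refine ⟨c, c.2, hcx, ?_⟩
  rw [connected_induce_iff]
  refine ⟨⟨x, hx, by simpa using (Ne.symm hcx)⟩, fun a ha b hb => ?_⟩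
  have ha' : (⟨a, ha.1⟩ : X) ≠ c := fun h => ha.2 (by rw [← h]; exact rfl)
  have hb' : (⟨b, hb.1⟩ : X) ≠ c := fun h => hb.2 (by rw [← h]; exact rfl)
  exact rst_trans (key ⟨a, ha.1⟩ ha') (rst_symm (key ⟨b, hb.1⟩ hb'))
end Leaf

section ReservoirLemmas
set_option linter.unusedSectionVars false

lemma mem_reservoir_iff {A : Set V} {vi w u : V} :
    u ∈ reservoir G A vi w ↔ u ∈ A \ {w} ∧ vi ∈ A \ {w} ∧ Rst G (A \ {w}) vi u := by
  constructor
  · rintro ⟨hu, hv, hr⟩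
    exact ⟨hu, hv, rst_of_reachable hv hu hr⟩
  · rintro ⟨hu, hv, hr⟩
    obtain ⟨hy, hreach⟩ := reachable_of_rst hv hr
    exact ⟨hu, hv, hreach⟩

lemma reservoir_subset {A : Set V} {vi w : V} : reservoir G A vi w ⊆ A \ {w} :=
  fun _ hu => (mem_reservoir_iff.mp hu).1

lemma not_self_mem_reservoir {A : Set V} {vi w : V} : w ∉ reservoir G A vi w :=
  fun h => (reservoir_subset h).2 rfl

lemma vi_mem_reservoir {A : Set V} {vi w : V} (hvi : vi ∈ A) (hne : vi ≠ w) :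
    vi ∈ reservoir G A vi w :=
  mem_reservoir_iff.mpr ⟨⟨hvi, hne⟩, ⟨hvi, hne⟩, Relation.ReflTransGen.refl⟩

lemma reservoir_extend {A : Set V} {vi w u z : V} (hu : u ∈ reservoir G A vi w)
    (hz : z ∈ A) (hzw : z ≠ w) (hadj : G.Adj u z) : z ∈ reservoir G A vi w := by
  obtain ⟨hu1, hv1, hr⟩ := mem_reservoir_iff.mp hu
  exact mem_reservoir_iff.mpr ⟨⟨hz, hzw⟩, hv1, hr.tail ⟨hu1, ⟨hz, hzw⟩, hadj⟩⟩

lemma rst_reservoir {A : Set V} {vi w u : V} (hu : u ∈ reservoir G A vi w) :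
    Rst G (reservoir G A vi w) vi u := by
  obtain ⟨hu1, hv1, hr⟩ := mem_reservoir_iff.mp hu
  have := rst_closed (T := reservoir G A vi w)
    (fun a b ha hb hadj => reservoir_extend ha hb.1 hb.2 hadj) hr
    (vi_mem_reservoir hv1.1 hv1.2)
  exact this.2

lemma reservoir_connected {A : Set V} {vi w : V} (hvi : vi ∈ A) (hne : vi ≠ w) :
    (G.induce (reservoir G A vi w)).Connected := by
  rw [connected_induce_iff]
  exact ⟨⟨vi, vi_mem_reservoir hvi hne⟩, fun a ha b hb =>
    rst_trans (rst_symm (rst_reservoir ha)) (rst_reservoir hb)⟩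

lemma reservoir_mono_of_not_mem {A : Set V} {vi y z : V}
    (hz : z ∉ reservoir G A vi y) (hzvi : z ≠ vi) :
    reservoir G A vi y ⊆ reservoir G A vi z := by
  intro u hu
  obtain ⟨hu1, hv1, _⟩ := mem_reservoir_iff.mp hu
  have hres : reservoir G A vi y ⊆ A \ {z} := fun t ht =>
    ⟨(reservoir_subset ht).1, fun h => hz (h ▸ ht)⟩
  refine mem_reservoir_iff.mpr ⟨⟨hu1.1, fun h => hz (h ▸ hu)⟩, ⟨hv1.1, Ne.symm hzvi⟩, ?_⟩
  exact rst_mono hres (rst_reservoir hu)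

lemma exists_adj_reservoir {A : Set V} {vi w : V} (hconn : (G.induce A).Connected)
    (hvi : vi ∈ A) (hw : w ∈ A) (hne : vi ≠ w) :
    ∃ u ∈ reservoir G A vi w, G.Adj u w := by
  have hr : Rst G A vi w := (connected_induce_iff.mp hconn).2 vi hvi w hw
  suffices H : ∀ z, Rst G A vi z →
      (∃ u ∈ reservoir G A vi w, G.Adj u w) ∨ z ∈ reservoir G A vi w by
    rcases H w hr with h | h
    · exact h
    · exact absurd h not_self_mem_reservoir
  intro z hz
  induction hz with
  | refl => exact Or.inr (vi_mem_reservoir hvi hne)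
  | @tail b c _ hbc ih =>
    rcases ih with h | hb
    · exact Or.inl h
    · rcases eq_or_ne c w with rfl | hcw
      · exact Or.inl ⟨b, hb, hbc.2.2⟩
      · exact Or.inr (reservoir_extend hb hbc.2.1 hcw hbc.2.2)

end ReservoirLemmas

section ListLemmas

lemma chain'_imp_mem {α : Type*} {R S : α → α → Prop} :
    ∀ {l : List α}, l.Chain' R → (∀ a ∈ l, ∀ b ∈ l, R a b → S a b) → l.Chain' S
  | [], _, _ => List.isChain_nil
  | [_], _, _ => List.isChain_singleton _
  | a :: b :: t, h, himp => by
    change List.IsChain _ _ at h ⊢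
    rw [List.isChain_cons_cons] at h ⊢
    refine ⟨himp a (by simp) b (by simp) h.1, chain'_imp_mem h.2 ?_⟩
    intro x hx y hy hr
    exact himp x (by simp [hx]) y (by simp [hy]) hr

lemma mem_takeWhile_of_pairwise {α : Type*} {p : α → Bool} :
    ∀ {l : List α}, (l.Pairwise fun a b => p b = true → p a = true) →
      ∀ {x : α}, x ∈ l → p x = true → x ∈ l.takeWhile p
  | [], _, _, hx, _ => absurd hx List.not_mem_nil
  | a :: t, hp, x, hx, hpx => by
    rw [List.pairwise_cons] at hp
    rcases List.mem_cons.mp hx with rfl | hxt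
    · rw [List.takeWhile_cons_of_pos hpx]
      exact List.mem_cons_self
    · have hpa : p a = true := hp.1 x hxt hpx
      rw [List.takeWhile_cons_of_pos hpa]
      exact List.mem_cons_of_mem _ (mem_takeWhile_of_pairwise hp.2 hxt hpx)

lemma pairwise_or {α : Type*} {R : α → α → Prop} {l : List α} (h : l.Pairwise R)
    {a b : α} (ha : a ∈ l) (hb : b ∈ l) (hne : a ≠ b) : R a b ∨ R b a := by
  have h' : l.Pairwise (fun x y => R x y ∨ R y x) := h.imp fun hr => Or.inl hr
  have hsym : Symmetric (fun x y => R x y ∨ R y x) := fun x y hxy => hxy.symm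
  haveI : Std.Symm (fun x y => R x y ∨ R y x) := ⟨fun x y hxy => hsym hxy⟩
  exact h'.forall ha hb hne

end ListLemmas

section ConfigBasics
set_option linter.unusedSectionVars false

variable {cfg : Config G k v m}

lemma hasRank_zero {x : V} (h : HasRank cfg 0 x) : False := by
  simp only [HasRank] at h

lemma hasRank_one {x : V} : HasRank cfg 1 x ↔
    (IsCascadeVertex cfg x ∧ ∃ u ∈ cfg.A 0, G.Adj x u) := by simp only [HasRank]

lemma hasRank_succ_succ {r : ℕ} {x : V} : HasRank cfg (r + 2) x ↔
    (IsCascadeVertex cfg x ∧ (¬ ∃ u ∈ cfg.A 0, G.Adj x u) ∧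
      RankLink cfg (HasRank cfg (r + 1)) x ∧
      ∀ s, s < r → ¬ RankLink cfg (HasRank cfg (s + 1)) x) := by simp only [HasRank]

lemma hasRank_isCascade {s : ℕ} {x : V} (h : HasRank cfg s x) : IsCascadeVertex cfg x := by
  match s with
  | 0 => exact (hasRank_zero h).elim
  | 1 => exact (hasRank_one.mp h).1
  | s' + 2 => exact (hasRank_succ_succ.mp h).1

lemma hasRank_unique {x : V} : ∀ {s t : ℕ}, HasRank cfg s x → HasRank cfg t x → s = t := by
  intro s t hs ht
  match s, t with
  | 0, _ => exact (hasRank_zero hs).elim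
  | 1, 0 => exact (hasRank_zero ht).elim
  | s' + 2, 0 => exact (hasRank_zero ht).elim
  | 1, 1 => rfl
  | 1, t' + 2 => exact absurd (hasRank_one.mp hs).2 (hasRank_succ_succ.mp ht).2.1
  | s' + 2, 1 => exact absurd (hasRank_one.mp ht).2 (hasRank_succ_succ.mp hs).2.1
  | s' + 2, t' + 2 =>
    rcases Nat.lt_trichotomy s' t' with h | h | h
    · exact absurd (hasRank_succ_succ.mp hs).2.2.1 ((hasRank_succ_succ.mp ht).2.2.2 s' h)
    · rw [h]
    · exact absurd (hasRank_succ_succ.mp ht).2.2.1 ((hasRank_succ_succ.mp hs).2.2.2 t' h)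

lemma part_unique {x : V} {i j : Fin k} (hx : x ∈ cfg.c i) (hy : x ∈ cfg.c j) : i = j := by
  by_contra hne
  exact Set.disjoint_left.mp (cfg.disj hne) (cfg.c_mem i x hx).1 (cfg.c_mem j x hy).1

lemma valid_of_ropt : ∀ {r : ℕ}, ROptimal cfg r → Valid cfg
  | 0, h => h
  | r + 1, h => valid_of_ropt h.1

lemma ropt_mono {r : ℕ} (h : ROptimal cfg r) : ∀ {s : ℕ}, s ≤ r → ROptimal cfg s := by
  induction r with
  | zero => intro s hs; rw [Nat.le_zero.mp hs]; exact h
  | succ n ih =>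
    intro s hs
    rcases Nat.eq_or_lt_of_le hs with rfl | h'
    · exact h
    · exact ih h.1 (Nat.lt_succ_iff.mp h')

/-- ranks strictly increase along each cascade;
  the combined pairwise relation used throughout. -/
lemma pairwise_cascade (hvalid : Valid cfg) (i : Fin k) :
    (cfg.c i).Pairwise fun a b =>
      (reservoir G (cfg.A i) (v i) a ⊆ reservoir G (cfg.A i) (v i) b ∧
        b ∉ reservoir G (cfg.A i) (v i) a) ∧
      ∀ ra rb, HasRank cfg ra a → HasRank cfg rb b → ra < rb := by
  refine List.Pairwise.and ?_ (hvalid.2 i)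
  -- nested reservoirs
  have hchain := cfg.c_chain i
  have hmem := cfg.c_mem i
  generalize hl : cfg.c i = l at hchain hmem
  clear hl
  induction l with
  | nil => exact List.Pairwise.nil
  | cons a t ih =>
    change List.IsChain _ _ at hchain
    rw [List.isChain_cons] at hchain
    have ht := ih hchain.2 (fun b hb => hmem b (List.mem_cons_of_mem _ hb))
    rw [List.pairwise_cons]
    refine ⟨?_, ht⟩
    intro b hb
    -- b ∈ t; show res a ⊆ res b ∧ b ∉ res a
    induction t with
    | nil => exact absurd hb List.not_mem_nil
    | cons b0 t0 ih0 =>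
      have hrel : b0 ∉ reservoir G (cfg.A i) (v i) a := hchain.1 b0 rfl
      have hb0sub : reservoir G (cfg.A i) (v i) a ⊆ reservoir G (cfg.A i) (v i) b0 :=
        reservoir_mono_of_not_mem hrel (hmem b0 (by simp)).2
      rcases List.mem_cons.mp hb with rfl | hb'
      · exact ⟨hb0sub, hrel⟩
      · have hS := (List.pairwise_cons.mp ht).1 b hb'
        exact ⟨hb0sub.trans hS.1, fun hmem' => hS.2 (hb0sub hmem')⟩

end ConfigBasics

section Transfer
set_option linter.unusedSectionVars false

variable {cfg cfg₂ : Config G k v m}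

/-- Transfer of ranks between two configurations that agree sufficiently. -/
lemma rank_transfer {N : ℕ}
    (hA0 : cfg₂.A 0 = cfg.A 0)
    (hsub : ∀ i, ∀ x ∈ cfg₂.c i, x ∈ cfg.c i)
    (hkeep : ∀ i x s, x ∈ cfg.c i → HasRank cfg s x → s ≤ N → x ∈ cfg₂.c i)
    (hres_eq : ∀ i x s, x ∈ cfg₂.c i → HasRank cfg s x → s < N →
      reservoir G (cfg₂.A i) (v i) x = reservoir G (cfg.A i) (v i) x)
    (hres_sub : ∀ i x s, x ∈ cfg₂.c i → HasRank cfg s x → s ≤ N →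
      reservoir G (cfg.A i) (v i) x ⊆ reservoir G (cfg₂.A i) (v i) x) :
    ∀ s, s ≤ N → ∀ x,
      (HasRank cfg s x → HasRank cfg₂ s x) ∧ (HasRank cfg₂ s x → HasRank cfg s x) := by
  intro s
  induction s using Nat.strong_induction_on with
  | _ s IH =>
    intro hsN x
    match s, hsN with
    | 0, hsN => exact ⟨fun h => (hasRank_zero h).elim, fun h => (hasRank_zero h).elim⟩
    | 1, hsN =>
      constructor
      · rintro h
        obtain ⟨⟨i, hxi⟩, u, hu, hadj⟩ := hasRank_one.mp h
        exact hasRank_one.mpr ⟨⟨i, hkeep i x 1 hxi h hsN⟩, u, hA0 ▸ hu, hadj⟩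
      · rintro h
        obtain ⟨⟨i, hxi⟩, u, hu, hadj⟩ := hasRank_one.mp h
        exact hasRank_one.mpr ⟨⟨i, hsub i x hxi⟩, u, hA0 ▸ hu, hadj⟩
    | t + 2, hsN =>
      constructor
      · intro h
        obtain ⟨⟨i, hxi⟩, hnadj, hlink, hmin⟩ := hasRank_succ_succ.mp h
        refine hasRank_succ_succ.mpr ⟨⟨i, hkeep i x (t+2) hxi h hsN⟩, by rwa [hA0], ?_, ?_⟩
        · obtain ⟨i', j, hij, hxi', w', hw'c, hw'r, u, hures, hadj⟩ := hlink
          have hw'c₂ : w' ∈ cfg₂.c j := hkeep j w' (t+1) hw'c hw'r (by omega)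
          refine ⟨i', j, hij, hkeep i' x (t+2) hxi' h hsN, w', hw'c₂,
            (IH (t+1) (by omega) (by omega) w').1 hw'r, u, ?_, hadj⟩
          exact hres_sub j w' (t+1) hw'c₂ hw'r (by omega) hures
        · intro t' ht' hcon
          obtain ⟨i', j, hij, hxi', w', hw'c₂, hw'r₂, u, hures₂, hadj⟩ := hcon
          have hw'r : HasRank cfg (t'+1) w' := (IH (t'+1) (by omega) (by omega) w').2 hw'r₂
          refine hmin t' ht' ⟨i', j, hij, hsub i' x hxi', w', hsub j w' hw'c₂, hw'r, u, ?_, hadj⟩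
          rw [← hres_eq j w' (t'+1) hw'c₂ hw'r (by omega)]
          exact hures₂
      · intro h
        obtain ⟨⟨i, hxi⟩, hnadj, hlink, hmin⟩ := hasRank_succ_succ.mp h
        refine hasRank_succ_succ.mpr ⟨⟨i, hsub i x hxi⟩, by rwa [← hA0], ?_, ?_⟩
        · obtain ⟨i', j, hij, hxi', w', hw'c₂, hw'r₂, u, hures₂, hadj⟩ := hlink
          have hw'r : HasRank cfg (t+1) w' := (IH (t+1) (by omega) (by omega) w').2 hw'r₂
          refine ⟨i', j, hij, hsub i' x hxi', w', hsub j w' hw'c₂, hw'r, u, ?_, hadj⟩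
          rw [← hres_eq j w' (t+1) hw'c₂ hw'r (by omega)]
          exact hures₂
        · intro t' ht' hcon
          obtain ⟨i', j, hij, hxi', w', hw'c, hw'r, u, hures, hadj⟩ := hcon
          have hii' : i' = i := part_unique hxi' (hsub i x hxi)
          subst hii'
          have hw'c₂ : w' ∈ cfg₂.c j := hkeep j w' (t'+1) hw'c hw'r (by omega)
          refine hmin t' ht' ⟨i', j, hij, hxi, w', hw'c₂,
            (IH (t'+1) (by omega) (by omega) w').1 hw'r, u, ?_, hadj⟩
          exact hres_sub j w' (t'+1) hw'c₂ hw'r (by omega) hures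

lemma valid_transfer {N : ℕ}
    (hA0 : cfg₂.A 0 = cfg.A 0)
    (hsubl : ∀ i, List.Sublist (cfg₂.c i) (cfg.c i))
    (hkeep : ∀ i x s, x ∈ cfg.c i → HasRank cfg s x → s ≤ N → x ∈ cfg₂.c i)
    (hres_eq : ∀ i x s, x ∈ cfg₂.c i → HasRank cfg s x → s < N →
      reservoir G (cfg₂.A i) (v i) x = reservoir G (cfg.A i) (v i) x)
    (hres_sub : ∀ i x s, x ∈ cfg₂.c i → HasRank cfg s x → s ≤ N →
      reservoir G (cfg.A i) (v i) x ⊆ reservoir G (cfg₂.A i) (v i) x)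
    (hvalid : Valid cfg)
    (hrank_le : ∀ i x, x ∈ cfg₂.c i → ∃ s, s ≤ N ∧ HasRank cfg s x) :
    Valid cfg₂ := by
  have hsub : ∀ i, ∀ x ∈ cfg₂.c i, x ∈ cfg.c i := fun i x hx => (hsubl i).subset hx
  have htr := rank_transfer hA0 hsub hkeep hres_eq hres_sub
  constructor
  · rintro x ⟨i, hx⟩
    obtain ⟨s, hsN, hr⟩ := hrank_le i x hx
    exact ⟨s, (htr s hsN x).1 hr⟩
  · intro i
    have hp : (cfg₂.c i).Pairwise fun a b =>
        ∀ ra rb, HasRank cfg ra a → HasRank cfg rb b → ra < rb :=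
      (hvalid.2 i).sublist (hsubl i)
    refine hp.imp_of_mem ?_
    intro a b ha hb hold ra rb hra₂ hrb₂
    obtain ⟨sa, hsaN, hsa⟩ := hrank_le i a ha
    obtain ⟨sb, hsbN, hsb⟩ := hrank_le i b hb
    have : ra = sa := hasRank_unique hra₂ ((htr sa hsaN a).1 hsa)
    have : rb = sb := hasRank_unique hrb₂ ((htr sb hsbN b).1 hsb)
    subst_vars
    exact hold sa sb hsa hsb

lemma rho_transfer {N : ℕ}
    (hA0 : cfg₂.A 0 = cfg.A 0)
    (hsub : ∀ i, ∀ x ∈ cfg₂.c i, x ∈ cfg.c i)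
    (hkeep : ∀ i x s, x ∈ cfg.c i → HasRank cfg s x → s ≤ N → x ∈ cfg₂.c i)
    (hres_eq : ∀ i x s, x ∈ cfg₂.c i → HasRank cfg s x → s < N →
      reservoir G (cfg₂.A i) (v i) x = reservoir G (cfg.A i) (v i) x)
    (hres_sub : ∀ i x s, x ∈ cfg₂.c i → HasRank cfg s x → s ≤ N →
      reservoir G (cfg.A i) (v i) x ⊆ reservoir G (cfg₂.A i) (v i) x)
    {s : ℕ} (hsN : s ≤ N)
    (hres_eq_s : ∀ i x, x ∈ cfg₂.c i → HasRank cfg s x →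
      reservoir G (cfg₂.A i) (v i) x = reservoir G (cfg.A i) (v i) x) :
    rho cfg₂ s = rho cfg s := by
  have htr := rank_transfer hA0 hsub hkeep hres_eq hres_sub
  unfold rho
  congr 1
  ext u
  constructor
  · rintro ⟨i, x, hx₂, hr₂, hu⟩
    have hr : HasRank cfg s x := (htr s hsN x).2 hr₂
    exact ⟨i, x, hsub i x hx₂, hr, (hres_eq_s i x hx₂ hr) ▸ hu⟩
  · rintro ⟨i, x, hx, hr, hu⟩
    have hx₂ : x ∈ cfg₂.c i := hkeep i x s hx hr hsN
    exact ⟨i, x, hx₂, (htr s hsN x).1 hr, (hres_eq_s i x hx₂ hr).symm ▸ hu⟩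

lemma ropt_transfer {T : ℕ} (hT : ROptimal cfg T) (hv2 : Valid cfg₂)
    (heq : ∀ s, s ≤ T → rho cfg₂ s = rho cfg s) : ROptimal cfg₂ T := by
  induction T with
  | zero => exact hv2
  | succ n ih =>
    refine ⟨ih hT.1 (fun s hs => heq s (Nat.le_succ_of_le hs)), fun cfg' h' => ?_⟩
    rw [heq (n+1) le_rfl]
    exact hT.2 cfg' h'

end Transfer

section LemmaA
set_option linter.unusedSectionVars false
set_option maxHeartbeats 1000000

variable {cfg : Config G k v m}

lemma cascade_rank_inj (hvalid : Valid cfg) {p : Fin k} {x y : V} {s : ℕ}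
    (hx : x ∈ cfg.c p) (hy : y ∈ cfg.c p)
    (hrx : HasRank cfg s x) (hry : HasRank cfg s y) : x = y := by
  by_contra hne
  rcases pairwise_or (hvalid.2 p) hx hy hne with h | h
  · exact absurd (h s s hrx hry) (lt_irrefl s)
  · exact absurd (h s s hry hrx) (lt_irrefl s)

/-- **Key lemma.** In an `r`-optimal configuration, if there is a bridge `ab` landing in the
reservoir of a cascade vertex `w` of rank `r` in part `p`, and `a` has no neighbour in any
reservoir of a cascade vertex of rank `< r`, then `(A p) - w` has no stranded components:
it is exactly the reservoir of `w`. -/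
lemma no_stranded {r : ℕ} (hropt : ROptimal cfg r)
    {p : Fin k} {w : V} (hw : w ∈ cfg.c p) (hr : HasRank cfg r w)
    {a b : V} (ha : ∀ i, a ∉ cfg.A i) (hab : G.Adj a b)
    (hb : b ∈ reservoir G (cfg.A p) (v p) w)
    (hlow : ∀ e (i : Fin k) y s, y ∈ cfg.c i → HasRank cfg s y → s < r →
      e ∈ reservoir G (cfg.A i) (v i) y → ¬ G.Adj a e) :
    cfg.A p \ {w} = reservoir G (cfg.A p) (v p) w := by
  classical
  have hvalid : Valid cfg := valid_of_ropt hropt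
  have hwA : w ∈ cfg.A p := (cfg.c_mem p w hw).1
  have hwv : w ≠ v p := (cfg.c_mem p w hw).2
  have hvA : v p ∈ cfg.A p := cfg.hmem p
  have hvR : v p ∈ reservoir G (cfg.A p) (v p) w := vi_mem_reservoir hvA (Ne.symm hwv)
  have hp0 : p ≠ 0 := by
    intro h
    rw [h, cfg.c_zero] at hw
    exact List.not_mem_nil hw
  have hrpos : r ≠ 0 := fun h => hasRank_zero (h ▸ hr)
  refine Set.Subset.antisymm ?_ (fun u hu => reservoir_subset hu)
  by_contra hcon
  obtain ⟨x0, hx0, hx0R⟩ := Set.not_subset.mp hcon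
  -- the "stranded" region X
  set X : Set V := cfg.A p \ reservoir G (cfg.A p) (v p) w with hX
  have hwX : w ∈ X := ⟨hwA, not_self_mem_reservoir⟩
  have hx0X : x0 ∈ X := ⟨hx0.1, hx0R⟩
  have hx0w : x0 ≠ w := hx0.2
  -- X is connected
  have keyX : ∀ z, Rst G (cfg.A p) (v p) z →
      z ∈ reservoir G (cfg.A p) (v p) w ∨ Rst G X w z := by
    intro z hz
    induction hz with
    | refl => exact Or.inl hvR
    | @tail b' c' _ hbc ih =>
      rcases ih with hbR | hXb
      · rcases eq_or_ne c' w with rfl | hcw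
        · exact Or.inr Relation.ReflTransGen.refl
        · exact Or.inl (reservoir_extend hbR hbc.2.1 hcw hbc.2.2)
      · by_cases hcR : c' ∈ reservoir G (cfg.A p) (v p) w
        · exact Or.inl hcR
        · have hbX : b' ∈ X := rst_mem_right hwX hXb
          exact Or.inr (hXb.tail ⟨hbX, ⟨hbc.2.1, hcR⟩, hbc.2.2⟩)
  have hXconn : (G.induce X).Connected := by
    rw [connected_induce_iff]
    refine ⟨⟨w, hwX⟩, fun z1 hz1 z2 hz2 => ?_⟩
    have h1 := keyX z1 ((connected_induce_iff.mp (cfg.conn p)).2 (v p) hvA z1 hz1.1)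
    have h2 := keyX z2 ((connected_induce_iff.mp (cfg.conn p)).2 (v p) hvA z2 hz2.1)
    rcases h1 with h1 | h1
    · exact absurd h1 hz1.2
    rcases h2 with h2 | h2
    · exact absurd h2 hz2.2
    exact rst_trans (rst_symm h1) h2
  -- choose a removable vertex c of X
  obtain ⟨c, hcX, hcw, hXc⟩ := exists_noncut hXconn hwX hx0X hx0w
  have hcA : c ∈ cfg.A p := hcX.1
  have hcR : c ∉ reservoir G (cfg.A p) (v p) w := hcX.2
  have hcv : c ≠ v p := fun h => hcR (h ▸ hvR)
  have hbcne : b ≠ c := fun h => hcR (h ▸ hb)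
  -- A - c is connected
  have hsplit : cfg.A p \ {c} = reservoir G (cfg.A p) (v p) w ∪ (X \ {c}) := by
    ext z
    constructor
    · rintro ⟨hz, hznc⟩
      by_cases hzR : z ∈ reservoir G (cfg.A p) (v p) w
      · exact Or.inl hzR
      · exact Or.inr ⟨⟨hz, hzR⟩, hznc⟩
    · rintro (hz | hz)
      · exact ⟨(reservoir_subset hz).1, fun h => hcR (h ▸ hz)⟩
      · exact ⟨hz.1.1, hz.2⟩
  obtain ⟨ustar, hustar, hustarw⟩ :=
    exists_adj_reservoir (cfg.conn p) hvA hwA (Ne.symm hwv)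
  have hApc : (G.induce (cfg.A p \ {c})).Connected := by
    rw [hsplit]
    exact induce_union_connected_of_adj (reservoir_connected hvA (Ne.symm hwv)) hXc
      hustar ⟨hwX, Ne.symm hcw⟩ hustarw
  -- the modified configuration
  set pred : V → Bool := fun x => decide (∃ s, s ≤ r ∧ HasRank cfg s x) with hpred
  have predIff : ∀ x, pred x = true ↔ ∃ s, s ≤ r ∧ HasRank cfg s x := by
    intro x; rw [hpred]; exact decide_eq_true_iff
  set A₂ : Fin k → Set V := fun i => if i = p then (cfg.A p \ {c}) ∪ {a} else cfg.A i with hA₂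
  set c₂ : Fin k → List V := fun i => (cfg.c i).takeWhile pred with hc₂
  have hA₂p : A₂ p = (cfg.A p \ {c}) ∪ {a} := by rw [hA₂]; simp
  have hA₂ne : ∀ i, i ≠ p → A₂ i = cfg.A i := by intro i h; rw [hA₂]; simp [h]
  have htw_sub : ∀ i, List.Sublist (c₂ i) (cfg.c i) :=
    fun i => (List.takeWhile_prefix _).sublist
  have htw_mem : ∀ i x, x ∈ c₂ i → x ∈ cfg.c i ∧ ∃ s, s ≤ r ∧ HasRank cfg s x := by
    intro i x hx
    exact ⟨(htw_sub i).subset hx, (predIff x).mp (List.mem_takeWhile_imp hx)⟩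
  have htw_keep : ∀ (i : Fin k) x s, x ∈ cfg.c i → HasRank cfg s x → s ≤ r → x ∈ c₂ i := by
    intro i x s hx hrx hsr
    refine mem_takeWhile_of_pairwise ?_ hx ((predIff x).mpr ⟨s, hsr, hrx⟩)
    refine (hvalid.2 i).imp_of_mem ?_
    intro a' b' ha' hb' hrel hpb
    obtain ⟨sb, hsb, hrb⟩ := (predIff b').mp hpb
    obtain ⟨sa, hra⟩ := hvalid.1 a' ⟨i, ha'⟩
    exact (predIff a').mpr ⟨sa, le_of_lt (lt_of_lt_of_le (hrel sa sb hra hrb) hsb), hra⟩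
  -- reservoirs of low-rank cascade vertices of part p are nested below that of w
  have hlowrank_sub : ∀ y s, y ∈ cfg.c p → HasRank cfg s y → s < r →
      reservoir G (cfg.A p) (v p) y ⊆ reservoir G (cfg.A p) (v p) w ∧
        w ∉ reservoir G (cfg.A p) (v p) y := by
    intro y s hy hry hsr
    have hyw : y ≠ w := fun h => absurd (hasRank_unique (h ▸ hry) hr) (Nat.ne_of_lt hsr)
    rcases pairwise_or (pairwise_cascade hvalid p) hy hw hyw with h | h
    · exact h.1
    · exact absurd (h.2 r s hr hry) (Nat.not_lt.mpr (le_of_lt hsr))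
  have hres_p_eq : ∀ y s, y ∈ c₂ p → HasRank cfg s y → s < r →
      reservoir G (A₂ p) (v p) y = reservoir G (cfg.A p) (v p) y := by
    intro y s hy₂ hry hsr
    obtain ⟨hy, -⟩ := htw_mem p y hy₂
    obtain ⟨hsubR, hwny⟩ := hlowrank_sub y s hy hry hsr
    have hyv : y ≠ v p := (cfg.c_mem p y hy).2
    have hcny : c ∉ reservoir G (cfg.A p) (v p) y := fun h => hcR (hsubR h)
    apply Set.Subset.antisymm
    · intro u hu₂
      obtain ⟨hu1, hv1, hrst⟩ := mem_reservoir_iff.mp hu₂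
      refine (rst_closed (T := reservoir G (cfg.A p) (v p) y) ?_ hrst
        (vi_mem_reservoir hvA (Ne.symm hyv))).1
      intro x' z hx' hz hadj
      rw [hA₂p] at hz
      rcases hz.1 with hz1 | hz1
      · exact reservoir_extend hx' hz1.1 hz.2 hadj
      · rw [Set.mem_singleton_iff] at hz1
        subst hz1
        exact absurd hadj.symm (hlow x' p y s hy hry hsr hx')
    · intro u hu
      have hsubY : reservoir G (cfg.A p) (v p) y ⊆ (A₂ p) \ {y} := by
        intro t ht
        rw [hA₂p]
        exact ⟨Or.inl ⟨(reservoir_subset ht).1, fun h => hcny (h ▸ ht)⟩,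
          (reservoir_subset ht).2⟩
      refine mem_reservoir_iff.mpr
        ⟨hsubY hu, hsubY (vi_mem_reservoir hvA (Ne.symm hyv)), ?_⟩
      exact rst_mono hsubY (rst_reservoir hu)
  -- the reservoir of w only grows
  have hsubYw : reservoir G (cfg.A p) (v p) w ⊆ (A₂ p) \ {w} := by
    intro t ht
    rw [hA₂p]
    exact ⟨Or.inl ⟨(reservoir_subset ht).1, fun h => hcR (h ▸ ht)⟩, (reservoir_subset ht).2⟩
  have hres_w_sub : reservoir G (cfg.A p) (v p) w ⊆ reservoir G (A₂ p) (v p) w := by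
    intro u hu
    refine mem_reservoir_iff.mpr ⟨hsubYw hu, hsubYw hvR, ?_⟩
    exact rst_mono hsubYw (rst_reservoir hu)
  have haw : a ≠ w := fun h => ha p (h ▸ hwA)
  have hares : a ∈ reservoir G (A₂ p) (v p) w := by
    refine reservoir_extend (hres_w_sub hb) ?_ haw hab.symm
    rw [hA₂p]; exact Or.inr rfl
  -- c is not kept in the cascade of part p
  have hc_not_in : ∀ x, x ∈ c₂ p → x ≠ c := by
    intro x hx₂ hxc
    subst hxc
    obtain ⟨hxc_mem, s, hsr, hrs⟩ := htw_mem p x hx₂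
    have hxw : x ≠ w := hcw
    rcases pairwise_or (pairwise_cascade hvalid p) hxc_mem hw hxw with h | h
    · -- x is before w in the cascade: then w ∉ res x, but A - x is connected
      have hwres : w ∈ reservoir G (cfg.A p) (v p) x := by
        refine mem_reservoir_iff.mpr ⟨⟨hwA, Ne.symm hxw⟩, ⟨hvA, Ne.symm hcv⟩, ?_⟩
        exact (connected_induce_iff.mp hApc).2 (v p) ⟨hvA, Ne.symm hcv⟩ w ⟨hwA, Ne.symm hcw⟩
      exact h.1.2 hwres
    · exact absurd (h.2 r s hr hrs) (Nat.not_lt.mpr hsr)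
  have hwc₂ : w ∈ c₂ p := htw_keep p w r hw hr le_rfl
  have hrank_r_unique : ∀ x, x ∈ cfg.c p → HasRank cfg r x → x = w := fun x hx hrx =>
    cascade_rank_inj hvalid hx hw hrx hr
  -- build the new configuration
  set cfg₂ : Config G k v m :=
    { A := A₂
      c := c₂
      disj := by
        intro i j hij
        by_cases hi : p = i
        · subst hi
          have hj : j ≠ p := Ne.symm hij
          rw [hA₂p, hA₂ne j hj, Set.disjoint_union_left]
          exact ⟨(cfg.disj hij).mono_left Set.diff_subset,
            Set.disjoint_singleton_left.mpr (ha j)⟩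
        · by_cases hj : p = j
          · subst hj
            rw [hA₂p, hA₂ne i (fun h => hi h.symm), Set.disjoint_union_right]
            exact ⟨(cfg.disj hij).mono_right Set.diff_subset,
              Set.disjoint_singleton_right.mpr (ha i)⟩
          · rw [hA₂ne i (fun h => hi h.symm), hA₂ne j (fun h => hj h.symm)]
            exact cfg.disj hij
      conn := by
        intro i
        by_cases hi : p = i
        · subst hi
          rw [hA₂p]
          exact induce_insert_connected_of_adj hApc
            ⟨(reservoir_subset hb).1, fun h => hcR (h ▸ hb)⟩ hab.symm
        · rw [hA₂ne i (fun h => hi h.symm)]; exact cfg.conn i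
      hcard := by
        intro i
        by_cases hi : p = i
        · subst hi
          rw [hA₂p, Set.union_singleton,
            Set.ncard_insert_of_notMem (fun h => ha p h.1) (Set.toFinite _),
            Set.ncard_diff_singleton_add_one hcA (Set.toFinite _)]
          exact cfg.hcard p
        · rw [hA₂ne i (fun h => hi h.symm)]; exact cfg.hcard i
      hmem := by
        intro i
        by_cases hi : p = i
        · subst hi
          rw [hA₂p]
          exact Or.inl ⟨hvA, fun h => hcv h.symm⟩
        · rw [hA₂ne i (fun h => hi h.symm)]; exact cfg.hmem i
      c_zero := by show (cfg.c 0).takeWhile pred = []; rw [cfg.c_zero]; rfl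
      c_nodup := fun i => (cfg.c_nodup i).sublist (htw_sub i)
      c_mem := by
        intro i x hx
        by_cases hi : p = i
        · subst hi
          obtain ⟨hxmem, -⟩ := htw_mem p x hx
          rw [hA₂p]
          exact ⟨Or.inl ⟨(cfg.c_mem p x hxmem).1, hc_not_in x hx⟩, (cfg.c_mem p x hxmem).2⟩
        · rw [hA₂ne i (fun h => hi h.symm)]
          exact cfg.c_mem i x ((htw_sub i).subset hx)
      c_chain := by
        intro i
        refine List.Pairwise.isChain ?_
        by_cases hi : p = i
        · subst hi
          refine ((pairwise_cascade hvalid p).sublist (htw_sub p)).imp_of_mem ?_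
          intro x y hx hy hrel
          obtain ⟨-, sx, hsxr, hrx⟩ := htw_mem p x hx
          obtain ⟨-, sy, hsyr, hry⟩ := htw_mem p y hy
          have hxr : sx < r := lt_of_lt_of_le (hrel.2 sx sy hrx hry) hsyr
          rw [hres_p_eq x sx hx hrx hxr]
          exact hrel.1.2
        · refine ((pairwise_cascade hvalid i).sublist (htw_sub i)).imp_of_mem ?_
          intro x y hx hy hrel
          rw [hA₂ne i (fun h => hi h.symm)]
          exact hrel.1.2 } with hcfg₂
  have hcc : cfg₂.c = c₂ := rfl
  have hAA : cfg₂.A = A₂ := rfl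
  -- transfer hypotheses
  have hA0₂ : cfg₂.A 0 = cfg.A 0 := by rw [hAA]; exact hA₂ne 0 (fun h => hp0 h.symm)
  have hsub₂ : ∀ i, ∀ x ∈ cfg₂.c i, x ∈ cfg.c i := fun i x hx => (htw_sub i).subset hx
  have hres_eq_t : ∀ (i : Fin k) x s, x ∈ cfg₂.c i → HasRank cfg s x → s < r →
      reservoir G (cfg₂.A i) (v i) x = reservoir G (cfg.A i) (v i) x := by
    intro i x s hx hrx hsr
    rw [hAA]
    by_cases hi : p = i
    · subst hi; exact hres_p_eq x s hx hrx hsr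
    · rw [hA₂ne i (fun h => hi h.symm)]
  have hres_sub_t : ∀ (i : Fin k) x s, x ∈ cfg₂.c i → HasRank cfg s x → s ≤ r →
      reservoir G (cfg.A i) (v i) x ⊆ reservoir G (cfg₂.A i) (v i) x := by
    intro i x s hx hrx hsr
    rw [hAA]
    by_cases hi : p = i
    · subst hi
      rcases lt_or_eq_of_le hsr with hlt | heq
      · rw [hres_p_eq x s hx hrx hlt]
      · subst heq
        have hxw : x = w := hrank_r_unique x ((htw_sub p).subset hx) hrx
        subst hxw
        exact hres_w_sub
    · rw [hA₂ne i (fun h => hi h.symm)]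
  have hrank_le₂ : ∀ (i : Fin k) x, x ∈ cfg₂.c i → ∃ s, s ≤ r ∧ HasRank cfg s x :=
    fun i x hx => (htw_mem i x hx).2
  have htrans := rank_transfer (cfg := cfg) (cfg₂ := cfg₂) (N := r)
    hA0₂ hsub₂ htw_keep hres_eq_t hres_sub_t
  have hvalid₂ : Valid cfg₂ :=
    valid_transfer hA0₂ htw_sub htw_keep hres_eq_t hres_sub_t hvalid hrank_le₂
  obtain ⟨r', rfl⟩ : ∃ r', r = r' + 1 :=
    ⟨r - 1, (Nat.succ_pred_eq_of_ne_zero hrpos).symm⟩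
  have hropt₂ : ROptimal cfg₂ r' := by
    refine ropt_transfer (ropt_mono hropt (Nat.le_succ r')) hvalid₂ ?_
    intro s hs
    refine rho_transfer hA0₂ hsub₂ htw_keep hres_eq_t hres_sub_t
      (le_of_lt (Nat.lt_succ_of_le hs)) ?_
    intro i x hx hrx
    exact hres_eq_t i x s hx hrx (Nat.lt_succ_of_le hs)
  -- rho increases at rank r : contradiction with optimality
  have hlt : rho cfg (r' + 1) < rho cfg₂ (r' + 1) := by
    have hSsub : {u | ∃ i, ∃ x ∈ cfg.c i, HasRank cfg (r' + 1) x ∧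
        u ∈ reservoir G (cfg.A i) (v i) x} ⊆
        {u | ∃ i, ∃ x ∈ cfg₂.c i, HasRank cfg₂ (r' + 1) x ∧
        u ∈ reservoir G (cfg₂.A i) (v i) x} := by
      rintro u ⟨i, x, hx, hrx, hu⟩
      refine ⟨i, x, htw_keep i x (r' + 1) hx hrx le_rfl,
        (htrans (r' + 1) le_rfl x).1 hrx, ?_⟩
      exact hres_sub_t i x (r' + 1) (htw_keep i x (r' + 1) hx hrx le_rfl) hrx le_rfl hu
    have hamem : a ∈ {u | ∃ i, ∃ x ∈ cfg₂.c i, HasRank cfg₂ (r' + 1) x ∧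
        u ∈ reservoir G (cfg₂.A i) (v i) x} :=
      ⟨p, w, hwc₂, (htrans (r' + 1) le_rfl w).1 hr, hares⟩
    have hanot : a ∉ {u | ∃ i, ∃ x ∈ cfg.c i, HasRank cfg (r' + 1) x ∧
        u ∈ reservoir G (cfg.A i) (v i) x} := by
      rintro ⟨i, x, hx, hrx, hu⟩
      exact ha i (reservoir_subset hu).1
    have hss := (Set.ssubset_iff_of_subset hSsub).mpr ⟨a, hamem, hanot⟩
    exact Set.ncard_lt_ncard hss (Set.toFinite _)
  exact absurd (hropt.2 cfg₂ hropt₂) (Nat.not_le.mpr hlt)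

end LemmaA

section Descent
set_option linter.unusedSectionVars false
set_option maxHeartbeats 1000000

variable {cfg : Config G k v m}

/-- Descent step: given an `(r'+2)`-optimal configuration with a bridge of (minimal) rank
`r'+2`, produce an `(r'+1)`-optimal configuration with a bridge of rank `r'+1`. -/
lemma descent {r' : ℕ} (hropt : ROptimal cfg (r' + 2))
    {p : Fin k} {w : V} (hw : w ∈ cfg.c p) (hr : HasRank cfg (r' + 2) w)
    {a b : V} (ha : ∀ i, a ∉ cfg.A i) (hab : G.Adj a b)
    (hb : b ∈ reservoir G (cfg.A p) (v p) w)
    (hlow : ∀ e (i : Fin k) y s, y ∈ cfg.c i → HasRank cfg s y → s < r' + 2 →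
      e ∈ reservoir G (cfg.A i) (v i) y → ¬ G.Adj a e) :
    ∃ (cfg₃ : Config G k v m) (q : Fin k) (w₃ a₃ b₃ : V),
      ROptimal cfg₃ (r' + 1) ∧ w₃ ∈ cfg₃.c q ∧ HasRank cfg₃ (r' + 1) w₃ ∧
      (∀ i, a₃ ∉ cfg₃.A i) ∧ G.Adj a₃ b₃ ∧
      b₃ ∈ reservoir G (cfg₃.A q) (v q) w₃ := by
  classical
  have hvalid : Valid cfg := valid_of_ropt hropt
  have heq : cfg.A p \ {w} = reservoir G (cfg.A p) (v p) w :=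
    no_stranded hropt hw hr ha hab hb hlow
  have hwA : w ∈ cfg.A p := (cfg.c_mem p w hw).1
  have hwv : w ≠ v p := (cfg.c_mem p w hw).2
  have hvA : v p ∈ cfg.A p := cfg.hmem p
  have hvR : v p ∈ reservoir G (cfg.A p) (v p) w := vi_mem_reservoir hvA (Ne.symm hwv)
  have hp0 : p ≠ 0 := by
    intro h
    rw [h, cfg.c_zero] at hw
    exact List.not_mem_nil hw
  have haw : a ≠ w := fun h => ha p (h ▸ hwA)
  -- extract the rank link of w
  obtain ⟨i₀, q, hij, hwi₀, w', hw'c, hw'r, u, hu, hwu⟩ := (hasRank_succ_succ.mp hr).2.2.1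
  have hi₀ : p = i₀ := (part_unique hwi₀ hw).symm
  subst hi₀
  -- the shifted configuration
  set pred : V → Bool := fun x => decide (∃ s, s ≤ r' + 1 ∧ HasRank cfg s x) with hpred
  have predIff : ∀ x, pred x = true ↔ ∃ s, s ≤ r' + 1 ∧ HasRank cfg s x := by
    intro x; rw [hpred]; exact decide_eq_true_iff
  set A₃ : Fin k → Set V := fun i => if i = p then (cfg.A p \ {w}) ∪ {a} else cfg.A i with hA₃
  set c₃ : Fin k → List V := fun i => (cfg.c i).takeWhile pred with hc₃
  have hA₃p : A₃ p = (cfg.A p \ {w}) ∪ {a} := by rw [hA₃]; simp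
  have hA₃ne : ∀ i, i ≠ p → A₃ i = cfg.A i := by intro i h; rw [hA₃]; simp [h]
  have htw_sub : ∀ i, List.Sublist (c₃ i) (cfg.c i) :=
    fun i => (List.takeWhile_prefix _).sublist
  have htw_mem : ∀ i x, x ∈ c₃ i → x ∈ cfg.c i ∧ ∃ s, s ≤ r' + 1 ∧ HasRank cfg s x := by
    intro i x hx
    exact ⟨(htw_sub i).subset hx, (predIff x).mp (List.mem_takeWhile_imp hx)⟩
  have htw_keep : ∀ (i : Fin k) x s, x ∈ cfg.c i → HasRank cfg s x → s ≤ r' + 1 →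
      x ∈ c₃ i := by
    intro i x s hx hrx hsr
    refine mem_takeWhile_of_pairwise ?_ hx ((predIff x).mpr ⟨s, hsr, hrx⟩)
    refine (hvalid.2 i).imp_of_mem ?_
    intro a' b' ha' hb' hrel hpb
    obtain ⟨sb, hsb, hrb⟩ := (predIff b').mp hpb
    obtain ⟨sa, hra⟩ := hvalid.1 a' ⟨i, ha'⟩
    exact (predIff a').mpr ⟨sa, le_of_lt (lt_of_lt_of_le (hrel sa sb hra hrb) hsb), hra⟩
  have hlowrank_sub : ∀ y s, y ∈ cfg.c p → HasRank cfg s y → s < r' + 2 →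
      reservoir G (cfg.A p) (v p) y ⊆ reservoir G (cfg.A p) (v p) w ∧
        w ∉ reservoir G (cfg.A p) (v p) y := by
    intro y s hy hry hsr
    have hyw : y ≠ w := fun h => absurd (hasRank_unique (h ▸ hry) hr) (Nat.ne_of_lt hsr)
    rcases pairwise_or (pairwise_cascade hvalid p) hy hw hyw with h | h
    · exact h.1
    · exact absurd (h.2 (r' + 2) s hr hry) (Nat.not_lt.mpr (le_of_lt hsr))
  have hx_ne_w : ∀ x, x ∈ c₃ p → x ≠ w := by
    intro x hx hxw
    obtain ⟨-, s, hsr, hrs⟩ := htw_mem p x hx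
    subst hxw
    exact absurd (hasRank_unique hrs hr) (by omega)
  have hres_p_eq : ∀ y s, y ∈ c₃ p → HasRank cfg s y → s ≤ r' + 1 →
      reservoir G (A₃ p) (v p) y = reservoir G (cfg.A p) (v p) y := by
    intro y s hy₃ hry hsr
    obtain ⟨hy, -⟩ := htw_mem p y hy₃
    obtain ⟨hsubR, hwny⟩ := hlowrank_sub y s hy hry (by omega)
    have hyv : y ≠ v p := (cfg.c_mem p y hy).2
    apply Set.Subset.antisymm
    · intro u' hu₂
      obtain ⟨hu1, hv1, hrst⟩ := mem_reservoir_iff.mp hu₂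
      refine (rst_closed (T := reservoir G (cfg.A p) (v p) y) ?_ hrst
        (vi_mem_reservoir hvA (Ne.symm hyv))).1
      intro x' z hx' hz hadj
      rw [hA₃p] at hz
      rcases hz.1 with hz1 | hz1
      · exact reservoir_extend hx' hz1.1 hz.2 hadj
      · rw [Set.mem_singleton_iff] at hz1
        subst hz1
        exact absurd hadj.symm (hlow x' p y s hy hry (by omega) hx')
    · intro u' hu'
      have hsubY : reservoir G (cfg.A p) (v p) y ⊆ (A₃ p) \ {y} := by
        intro t ht
        rw [hA₃p]
        exact ⟨Or.inl ⟨(reservoir_subset ht).1, fun h => hwny (h ▸ ht)⟩,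
          (reservoir_subset ht).2⟩
      refine mem_reservoir_iff.mpr
        ⟨hsubY hu', hsubY (vi_mem_reservoir hvA (Ne.symm hyv)), ?_⟩
      exact rst_mono hsubY (rst_reservoir hu')
  -- connectivity of the new part p
  have hconn₃p : (G.induce ((cfg.A p \ {w}) ∪ {a})).Connected := by
    rw [heq]
    exact induce_insert_connected_of_adj (reservoir_connected hvA (Ne.symm hwv))
      hb hab.symm
  set cfg₃ : Config G k v m :=
    { A := A₃
      c := c₃
      disj := by
        intro i j hij
        by_cases hi : p = i
        · subst hi
          have hj : j ≠ p := Ne.symm hij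
          rw [hA₃p, hA₃ne j hj, Set.disjoint_union_left]
          exact ⟨(cfg.disj hij).mono_left Set.diff_subset,
            Set.disjoint_singleton_left.mpr (ha j)⟩
        · by_cases hj : p = j
          · subst hj
            rw [hA₃p, hA₃ne i (fun h => hi h.symm), Set.disjoint_union_right]
            exact ⟨(cfg.disj hij).mono_right Set.diff_subset,
              Set.disjoint_singleton_right.mpr (ha i)⟩
          · rw [hA₃ne i (fun h => hi h.symm), hA₃ne j (fun h => hj h.symm)]
            exact cfg.disj hij
      conn := by
        intro i
        by_cases hi : p = i
        · subst hi
          rw [hA₃p]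
          exact hconn₃p
        · rw [hA₃ne i (fun h => hi h.symm)]; exact cfg.conn i
      hcard := by
        intro i
        by_cases hi : p = i
        · subst hi
          rw [hA₃p, Set.union_singleton,
            Set.ncard_insert_of_notMem (fun h => ha p h.1) (Set.toFinite _),
            Set.ncard_diff_singleton_add_one hwA (Set.toFinite _)]
          exact cfg.hcard p
        · rw [hA₃ne i (fun h => hi h.symm)]; exact cfg.hcard i
      hmem := by
        intro i
        by_cases hi : p = i
        · subst hi
          rw [hA₃p]
          exact Or.inl ⟨hvA, fun h => hwv h.symm⟩
        · rw [hA₃ne i (fun h => hi h.symm)]; exact cfg.hmem i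
      c_zero := by show (cfg.c 0).takeWhile pred = []; rw [cfg.c_zero]; rfl
      c_nodup := fun i => (cfg.c_nodup i).sublist (htw_sub i)
      c_mem := by
        intro i x hx
        by_cases hi : p = i
        · subst hi
          obtain ⟨hxmem, -⟩ := htw_mem p x hx
          rw [hA₃p]
          exact ⟨Or.inl ⟨(cfg.c_mem p x hxmem).1, hx_ne_w x hx⟩, (cfg.c_mem p x hxmem).2⟩
        · rw [hA₃ne i (fun h => hi h.symm)]
          exact cfg.c_mem i x ((htw_sub i).subset hx)
      c_chain := by
        intro i
        refine List.Pairwise.isChain ?_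
        by_cases hi : p = i
        · subst hi
          refine ((pairwise_cascade hvalid p).sublist (htw_sub p)).imp_of_mem ?_
          intro x y hx hy hrel
          obtain ⟨-, sx, hsxr, hrx⟩ := htw_mem p x hx
          rw [hres_p_eq x sx hx hrx hsxr]
          exact hrel.1.2
        · refine ((pairwise_cascade hvalid i).sublist (htw_sub i)).imp_of_mem ?_
          intro x y hx hy hrel
          rw [hA₃ne i (fun h => hi h.symm)]
          exact hrel.1.2 } with hcfg₃
  have hAA : cfg₃.A = A₃ := rfl
  have hA0₃ : cfg₃.A 0 = cfg.A 0 := by rw [hAA]; exact hA₃ne 0 (fun h => hp0 h.symm)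
  have hsub₃ : ∀ i, ∀ x ∈ cfg₃.c i, x ∈ cfg.c i := fun i x hx => (htw_sub i).subset hx
  have hres_eq_t : ∀ (i : Fin k) x s, x ∈ cfg₃.c i → HasRank cfg s x → s < r' + 1 →
      reservoir G (cfg₃.A i) (v i) x = reservoir G (cfg.A i) (v i) x := by
    intro i x s hx hrx hsr
    rw [hAA]
    by_cases hi : p = i
    · subst hi; exact hres_p_eq x s hx hrx (le_of_lt hsr)
    · rw [hA₃ne i (fun h => hi h.symm)]
  have hres_eq_t' : ∀ (i : Fin k) x s, x ∈ cfg₃.c i → HasRank cfg s x → s ≤ r' + 1 →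
      reservoir G (cfg₃.A i) (v i) x = reservoir G (cfg.A i) (v i) x := by
    intro i x s hx hrx hsr
    rw [hAA]
    by_cases hi : p = i
    · subst hi; exact hres_p_eq x s hx hrx hsr
    · rw [hA₃ne i (fun h => hi h.symm)]
  have hres_sub_t : ∀ (i : Fin k) x s, x ∈ cfg₃.c i → HasRank cfg s x → s ≤ r' + 1 →
      reservoir G (cfg.A i) (v i) x ⊆ reservoir G (cfg₃.A i) (v i) x := by
    intro i x s hx hrx hsr
    rw [hres_eq_t' i x s hx hrx hsr]
  have hrank_le₃ : ∀ (i : Fin k) x, x ∈ cfg₃.c i → ∃ s, s ≤ r' + 1 ∧ HasRank cfg s x :=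
    fun i x hx => (htw_mem i x hx).2
  have htrans := rank_transfer (cfg := cfg) (cfg₂ := cfg₃) (N := r' + 1)
    hA0₃ hsub₃ htw_keep hres_eq_t hres_sub_t
  have hvalid₃ : Valid cfg₃ :=
    valid_transfer hA0₃ htw_sub htw_keep hres_eq_t hres_sub_t hvalid hrank_le₃
  have hropt₃ : ROptimal cfg₃ (r' + 1) := by
    refine ropt_transfer (ropt_mono hropt (Nat.le_succ (r' + 1))) hvalid₃ ?_
    intro s hs
    refine rho_transfer hA0₃ hsub₃ htw_keep hres_eq_t hres_sub_t hs ?_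
    intro i x hx hrx
    exact hres_eq_t' i x s hx hrx hs
  -- the new bridge : the edge w-u into the reservoir of w'
  have hq : q ≠ p := Ne.symm hij
  have hw'c₃ : w' ∈ c₃ q := htw_keep q w' (r' + 1) hw'c hw'r le_rfl
  refine ⟨cfg₃, q, w', w, u, hropt₃, hw'c₃, (htrans (r' + 1) le_rfl w').1 hw'r, ?_, hwu, ?_⟩
  · intro i
    by_cases hi : p = i
    · subst hi
      rw [hAA, hA₃p]
      rintro (h | h)
      · exact h.2 rfl
      · exact haw h.symm
    · rw [hAA, hA₃ne i (fun h => hi h.symm)]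
      intro hwi
      have hpi : p ≠ i := fun h => hi h
      exact Set.disjoint_left.mp (cfg.disj hpi) hwA hwi
  · have : cfg₃.A q = cfg.A q := by rw [hAA]; exact hA₃ne q hq
    rw [this]
    exact hu

end Descent

section MainInduction
set_option linter.unusedSectionVars false
set_option maxHeartbeats 1000000

variable {cfg : Config G k v m}

/-- Base case: a bridge of rank 1 lets us grow part 0. -/
lemma base_case (hropt : ROptimal cfg 1)
    {p : Fin k} {w : V} (hw : w ∈ cfg.c p) (hr : HasRank cfg 1 w)
    {a b : V} (ha : ∀ i, a ∉ cfg.A i) (hab : G.Adj a b)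
    (hb : b ∈ reservoir G (cfg.A p) (v p) w) :
    ∃ B : Fin k → Set V,
      (Pairwise fun i j => Disjoint (B i) (B j)) ∧
      (∀ i, (G.induce (B i)).Connected) ∧
      (∀ i, v i ∈ B i) ∧
      (B 0).ncard = m 0 + 1 ∧
      (∀ i, i ≠ 0 → (B i).ncard = m i) := by
  classical
  have hlow : ∀ e (i : Fin k) y s, y ∈ cfg.c i → HasRank cfg s y → s < 1 →
      e ∈ reservoir G (cfg.A i) (v i) y → ¬ G.Adj a e := by
    intro e i y s hy hrs hs he
    exact (hasRank_zero ((Nat.lt_one_iff.mp hs) ▸ hrs)).elim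
  have heq : cfg.A p \ {w} = reservoir G (cfg.A p) (v p) w :=
    no_stranded hropt hw hr ha hab hb hlow
  obtain ⟨-, u0, hu0, hwu0⟩ := hasRank_one.mp hr
  have hwA : w ∈ cfg.A p := (cfg.c_mem p w hw).1
  have hwv : w ≠ v p := (cfg.c_mem p w hw).2
  have hvA : v p ∈ cfg.A p := cfg.hmem p
  have hp0 : p ≠ 0 := by
    intro h
    rw [h, cfg.c_zero] at hw
    exact List.not_mem_nil hw
  have h0p : (0 : Fin k) ≠ p := Ne.symm hp0
  have haw : a ≠ w := fun h => ha p (h ▸ hwA)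
  have hw0 : w ∉ cfg.A 0 := fun h => Set.disjoint_left.mp (cfg.disj hp0) hwA h
  have hwnotq : ∀ i, i ≠ p → w ∉ cfg.A i := by
    intro i hi hmem
    exact Set.disjoint_left.mp (cfg.disj hi) hmem hwA
  set B : Fin k → Set V := fun i =>
    if i = 0 then cfg.A 0 ∪ {w} else if i = p then (cfg.A p \ {w}) ∪ {a} else cfg.A i
    with hB
  have hB0 : B 0 = cfg.A 0 ∪ {w} := by rw [hB]; simp
  have hBp : B p = (cfg.A p \ {w}) ∪ {a} := by rw [hB]; simp [hp0]
  have hBq : ∀ i, i ≠ 0 → i ≠ p → B i = cfg.A i := by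
    intro i h1 h2; rw [hB]; simp [h1, h2]
  -- disjointness facts
  have d0p : Disjoint (B 0) (B p) := by
    rw [hB0, hBp, Set.disjoint_union_left]
    constructor
    · rw [Set.disjoint_union_right]
      exact ⟨(cfg.disj h0p).mono_right Set.diff_subset,
        Set.disjoint_singleton_right.mpr (ha 0)⟩
    · rw [Set.disjoint_union_right]
      refine ⟨Set.disjoint_singleton_left.mpr (fun h => h.2 rfl),
        Set.disjoint_singleton_left.mpr ?_⟩
      rw [Set.mem_singleton_iff]
      exact fun h => haw h.symm
  have d0q : ∀ i, i ≠ 0 → i ≠ p → Disjoint (B 0) (B i) := by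
    intro i h1 h2
    rw [hB0, hBq i h1 h2, Set.disjoint_union_left]
    exact ⟨cfg.disj (Ne.symm h1), Set.disjoint_singleton_left.mpr (hwnotq i h2)⟩
  have dpq : ∀ i, i ≠ 0 → i ≠ p → Disjoint (B p) (B i) := by
    intro i h1 h2
    rw [hBp, hBq i h1 h2, Set.disjoint_union_left]
    exact ⟨((cfg.disj (Ne.symm h2)).mono_left Set.diff_subset),
      Set.disjoint_singleton_left.mpr (ha i)⟩
  have dqq : ∀ i j, i ≠ 0 → i ≠ p → j ≠ 0 → j ≠ p → i ≠ j → Disjoint (B i) (B j) := by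
    intro i j h1 h2 h3 h4 hij
    rw [hBq i h1 h2, hBq j h3 h4]
    exact cfg.disj hij
  refine ⟨B, ?_, ?_, ?_, ?_, ?_⟩
  · intro i j hij
    by_cases hi0 : i = 0
    · subst hi0
      by_cases hjp : j = p
      · rw [hjp]; exact d0p
      · exact d0q j (Ne.symm hij) hjp
    · by_cases hip : i = p
      · by_cases hj0 : j = 0
        · rw [hip, hj0]; exact d0p.symm
        · rw [hip]
          exact dpq j hj0 (fun h => hij (by rw [hip, h]))
      · by_cases hj0 : j = 0
        · rw [hj0]; exact (d0q i hi0 hip).symm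
        · by_cases hjp : j = p
          · rw [hjp]; exact (dpq i hi0 hip).symm
          · exact dqq i j hi0 hip hj0 hjp hij
  · intro i
    by_cases hi0 : i = 0
    · subst hi0
      rw [hB0]
      exact induce_insert_connected_of_adj (cfg.conn 0) hu0 hwu0.symm
    · by_cases hip : i = p
      · rw [hip, hBp, heq]
        exact induce_insert_connected_of_adj
          (reservoir_connected hvA (Ne.symm hwv)) hb hab.symm
      · rw [hBq i hi0 hip]; exact cfg.conn i
  · intro i
    by_cases hi0 : i = 0
    · subst hi0; rw [hB0]; exact Or.inl (cfg.hmem 0)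
    · by_cases hip : i = p
      · have hvi : v i = v p := by rw [hip]
        rw [hip, hBp]
        exact Or.inl ⟨hvA, fun h => hwv h.symm⟩
      · rw [hBq i hi0 hip]; exact cfg.hmem i
  · rw [hB0, Set.union_singleton, Set.ncard_insert_of_notMem hw0 (Set.toFinite _),
      cfg.hcard 0]
  · intro i hi0
    by_cases hip : i = p
    · rw [hip, hBp, Set.union_singleton,
        Set.ncard_insert_of_notMem (fun h => ha p h.1) (Set.toFinite _),
        Set.ncard_diff_singleton_add_one hwA (Set.toFinite _)]
      exact cfg.hcard p
    · rw [hBq i hi0 hip]; exact cfg.hcard i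

lemma main_Q : ∀ (r : ℕ) (cfg : Config G k v m), ROptimal cfg r →
    ∀ (p : Fin k) (w a b : V), w ∈ cfg.c p → HasRank cfg r w → (∀ i, a ∉ cfg.A i) →
    G.Adj a b → b ∈ reservoir G (cfg.A p) (v p) w →
    ∃ B : Fin k → Set V,
      (Pairwise fun i j => Disjoint (B i) (B j)) ∧
      (∀ i, (G.induce (B i)).Connected) ∧
      (∀ i, v i ∈ B i) ∧
      (B 0).ncard = m 0 + 1 ∧
      (∀ i, i ≠ 0 → (B i).ncard = m i) := by
  intro r
  induction r using Nat.strong_induction_on with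
  | _ r IH =>
  intro cfg hropt p w a b hw hr ha hab hb
  by_cases hlowex : ∃ e, ∃ (i : Fin k), ∃ y s, y ∈ cfg.c i ∧ HasRank cfg s y ∧ s < r ∧
      e ∈ reservoir G (cfg.A i) (v i) y ∧ G.Adj a e
  · obtain ⟨e, i, y, s, hy, hrs, hsr, he, hae⟩ := hlowex
    exact IH s hsr cfg (ropt_mono hropt (le_of_lt hsr)) i y a e hy hrs ha hae he
  · have hlow : ∀ e (i : Fin k) y s, y ∈ cfg.c i → HasRank cfg s y → s < r →
        e ∈ reservoir G (cfg.A i) (v i) y → ¬ G.Adj a e :=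
      fun e i y s h1 h2 h3 h4 h5 => hlowex ⟨e, i, y, s, h1, h2, h3, h4, h5⟩
    rcases r with - | r'
    · exact (hasRank_zero hr).elim
    rcases r' with - | r''
    · exact base_case hropt hw hr ha hab hb
    · obtain ⟨cfg₃, q, w₃, a₃, b₃, h1, h2, h3, h4, h5, h6⟩ :=
        descent hropt hw hr ha hab hb hlow
      exact IH (r'' + 1) (by omega) cfg₃ h1 q w₃ a₃ b₃ h2 h3 h4 h5 h6

end MainInduction

/-- **Lemma 1 of Hoyer–Thomas.**  In the setting of Theorem 2, if there is an
optimal configuration containing a bridge, then `G` has pairwise vertex-disjoint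
connected subgraphs `B 0, …, B (k-1)` with `v i ∈ B i`, where `B 0` has exactly
`m 0 + 1` vertices and `B i` has exactly `m i` vertices for `i ≠ 0`. -/
theorem optimal_with_bridge {V : Type} [Fintype V]
    (G : SimpleGraph V) (k : ℕ) [NeZero k] (hk : 2 ≤ k)
    (hconn : KConnected G k)
    (v : Fin k → V) (hv : Function.Injective v)
    (m : Fin k → ℕ) (hm : ∀ i, 0 < m i)
    (hsum : ∑ i, m i < Fintype.card V)
    (A : Fin k → Set V)
    (hdisj : Pairwise fun i j => Disjoint (A i) (A j))
    (hconnA : ∀ i, (G.induce (A i)).Connected)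
    (hvA : ∀ i, v i ∈ A i)
    (hcardA : ∀ i, (A i).ncard = m i)
    (cfg : Config G k v m) (hopt : Optimal cfg)
    (hbridge : ∃ a b, IsBridgeEdge cfg a b) :
    ∃ B : Fin k → Set V,
      (Pairwise fun i j => Disjoint (B i) (B j)) ∧
      (∀ i, (G.induce (B i)).Connected) ∧
      (∀ i, v i ∈ B i) ∧
      (B 0).ncard = m 0 + 1 ∧
      (∀ i, i ≠ 0 → (B i).ncard = m i) := by
  obtain ⟨a, b, hab, haS, hres⟩ := hbridge
  obtain ⟨i, w, hw, hb⟩ := hres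
  have hvalid : Valid cfg := hopt 0
  obtain ⟨r, hr⟩ := hvalid.1 w ⟨i, hw⟩
  exact main_Q r cfg (hopt r) i w a b hw hr haS hab hb
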